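/- For any S ∈ W^1_r, any n ≥ 2 and any 1 ≤ j ≤ n, the difference between the discrete and continuous Fourier coefficients satisfies |θ_{j,n} − θ_j| ≤ 2π √r · j/n, where θ_{j,n} = (S, φ_j)_n and θ_j = ∫₀¹ S(t) φ_j(t) dt. -/

import Mathlib

open Finset MeasureTheory

/-- Trigonometric basis on `[0,1]`. -/
noncomputable def phiB (j : ℕ) (x : ℝ) : ℝ :=
  if j = 1 then 1
  else if j % 2 = 0 then Real.sqrt 2 * Real.cos (2 * Real.pi * (j / 2 : ℕ) * x)
  else Real.sqrt 2 * Real.sin (2 * Real.pi * (j / 2 : ℕ) * x)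

/-- Sobolev ball `W^k_r`. -/
noncomputable def WBall (k : ℕ) (r : ℝ) : Set (ℝ → ℝ) :=
  {f | (∀ x, f (x + 1) = f x) ∧ ContDiff ℝ k f ∧
    ∑ j ∈ Finset.range (k + 1), ∫ t in (0:ℝ)..1, (iteratedDeriv j f t) ^ 2 ≤ r}

/-- Discrete Fourier coefficient `θ_{j,n} = (S,φ_j)_n`. -/
noncomputable def thetaDisc (n : ℕ) (S : ℝ → ℝ) (j : ℕ) : ℝ :=
  (1 / (n : ℝ)) * ∑ l ∈ Finset.Icc 1 n, S ((l : ℝ) / n) * phiB j ((l : ℝ) / n)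

/-- Continuous Fourier coefficient `θ_j = ∫₀¹ S φ_j`. -/
noncomputable def thetaCont (S : ℝ → ℝ) (j : ℕ) : ℝ :=
  ∫ t in (0:ℝ)..1, S t * phiB j t

/-- Derivative of the trigonometric basis. -/
noncomputable def phiB' (j : ℕ) (x : ℝ) : ℝ :=
  if j = 1 then 0
  else if j % 2 = 0 then
    -(Real.sqrt 2 * (2 * Real.pi * (j / 2 : ℕ)) * Real.sin (2 * Real.pi * (j / 2 : ℕ) * x))
  else Real.sqrt 2 * (2 * Real.pi * (j / 2 : ℕ)) * Real.cos (2 * Real.pi * (j / 2 : ℕ) * x)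

lemma hasDerivAt_phiB (j : ℕ) (x : ℝ) : HasDerivAt (phiB j) (phiB' j x) x := by
  obtain ⟨c, hc⟩ : ∃ c : ℝ, c = 2 * Real.pi * ((j / 2 : ℕ) : ℝ) := ⟨_, rfl⟩
  have hlin : HasDerivAt (fun x : ℝ => c * x) c x := by
    simpa using (hasDerivAt_id x).const_mul c
  by_cases h : j = 1
  · have e : phiB j = fun _ => (1:ℝ) := by funext y; simp [phiB, h]
    have e' : phiB' j x = 0 := by simp [phiB', h]
    rw [e, e']; exact hasDerivAt_const x 1
  by_cases h2 : j % 2 = 0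
  · have H := ((Real.hasDerivAt_cos (c * x)).comp x hlin).const_mul (Real.sqrt 2)
    have e : phiB j = fun y => Real.sqrt 2 * Real.cos (c * y) := by
      funext y; simp [phiB, h, h2, hc]
    have e' : phiB' j x = Real.sqrt 2 * (-Real.sin (c * x) * c) := by
      simp [phiB', h, h2, hc]; ring
    rw [e, e']; exact H
  · have H := ((Real.hasDerivAt_sin (c * x)).comp x hlin).const_mul (Real.sqrt 2)
    have e : phiB j = fun y => Real.sqrt 2 * Real.sin (c * y) := by
      funext y; simp [phiB, h, h2, hc]
    have e' : phiB' j x = Real.sqrt 2 * (Real.cos (c * x) * c) := by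
      simp [phiB', h, h2, hc]; ring
    rw [e, e']; exact H

lemma abs_phiB_le (j : ℕ) (x : ℝ) : |phiB j x| ≤ Real.sqrt 2 := by
  have h2 : (1:ℝ) ≤ Real.sqrt 2 := by
    rw [show (1:ℝ) = Real.sqrt 1 by simp]; exact Real.sqrt_le_sqrt (by norm_num)
  have hs : (0:ℝ) ≤ Real.sqrt 2 := Real.sqrt_nonneg 2
  unfold phiB
  split_ifs
  · simpa using h2
  · rw [abs_mul, abs_of_nonneg hs]
    calc Real.sqrt 2 * |Real.cos _| ≤ Real.sqrt 2 * 1 :=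
      mul_le_mul_of_nonneg_left (Real.abs_cos_le_one _) hs
    _ = Real.sqrt 2 := mul_one _
  · rw [abs_mul, abs_of_nonneg hs]
    calc Real.sqrt 2 * |Real.sin _| ≤ Real.sqrt 2 * 1 :=
      mul_le_mul_of_nonneg_left (Real.abs_sin_le_one _) hs
    _ = Real.sqrt 2 := mul_one _

lemma abs_phiB'_le (j : ℕ) (x : ℝ) : |phiB' j x| ≤ Real.sqrt 2 * Real.pi * j := by
  have hs : (0:ℝ) ≤ Real.sqrt 2 := Real.sqrt_nonneg 2
  have hpi : (0:ℝ) ≤ Real.pi := Real.pi_nonneg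
  have hfloor : ((j / 2 : ℕ) : ℝ) * 2 ≤ (j : ℝ) := by
    exact_mod_cast Nat.div_mul_le_self j 2
  have hcoef : Real.sqrt 2 * (2 * Real.pi * (j / 2 : ℕ)) ≤ Real.sqrt 2 * Real.pi * j := by
    have : 2 * Real.pi * ((j / 2 : ℕ) : ℝ) ≤ Real.pi * j := by nlinarith
    nlinarith
  unfold phiB'
  split_ifs
  · simp; positivity
  · rw [abs_neg, abs_mul, abs_of_nonneg (by positivity)]
    calc Real.sqrt 2 * (2 * Real.pi * (j/2:ℕ)) * |Real.sin _|
        ≤ Real.sqrt 2 * (2 * Real.pi * (j/2:ℕ)) * 1 :=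
          mul_le_mul_of_nonneg_left (Real.abs_sin_le_one _) (by positivity)
      _ ≤ _ := by simpa using hcoef
  · rw [abs_mul, abs_of_nonneg (by positivity)]
    calc Real.sqrt 2 * (2 * Real.pi * (j/2:ℕ)) * |Real.cos _|
        ≤ Real.sqrt 2 * (2 * Real.pi * (j/2:ℕ)) * 1 :=
          mul_le_mul_of_nonneg_left (Real.abs_cos_le_one _) (by positivity)
      _ ≤ _ := by simpa using hcoef

lemma continuous_phiB (j : ℕ) : Continuous (phiB j) := by
  unfold phiB; split_ifs <;> continuity

lemma continuous_phiB' (j : ℕ) : Continuous (phiB' j) := by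
  unfold phiB'; split_ifs <;> continuity

/-- Cauchy–Schwarz lite: `∫₀¹ |f| ≤ √(∫₀¹ f²)` for continuous `f`. -/
lemma int_abs_le_sqrt (f : ℝ → ℝ) (hf : Continuous f) :
    (∫ t in (0:ℝ)..1, |f t|) ≤ Real.sqrt (∫ t in (0:ℝ)..1, f t ^ 2) := by
  set I := ∫ t in (0:ℝ)..1, f t ^ 2 with hI
  have hI0 : 0 ≤ I := intervalIntegral.integral_nonneg (by norm_num) (fun u _ => sq_nonneg _)
  refine le_of_forall_sub_le ?_
  intro ε hε
  rw [sub_le_iff_le_add]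
  set e := Real.sqrt I + ε with he'
  have he : 0 < e := by positivity
  have hIe : I ≤ e ^ 2 := by
    have h1 : Real.sqrt I ≤ e := by rw [he']; linarith
    calc I = Real.sqrt I ^ 2 := (Real.sq_sqrt hI0).symm
    _ ≤ e ^ 2 := by nlinarith [Real.sqrt_nonneg I]
  have hpt : ∀ t ∈ Set.Icc (0:ℝ) 1, |f t| ≤ f t ^ 2 / (2 * e) + e / 2 := by
    intro t _
    have := sq_nonneg (|f t| - e)
    have hsq : |f t| ^ 2 = f t ^ 2 := sq_abs _
    rw [div_add_div _ _ (by positivity : (2:ℝ) * e ≠ 0) (by norm_num : (2:ℝ) ≠ 0),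
      le_div_iff₀ (by positivity)]
    nlinarith [abs_nonneg (f t)]
  have hint : (∫ t in (0:ℝ)..1, |f t|) ≤ ∫ t in (0:ℝ)..1, (f t ^ 2 / (2 * e) + e / 2) := by
    apply intervalIntegral.integral_mono_on (by norm_num)
    · exact hf.abs.intervalIntegrable _ _
    · exact (((hf.pow 2).div_const _).add continuous_const).intervalIntegrable _ _
    · exact hpt
  have hval : (∫ t in (0:ℝ)..1, (f t ^ 2 / (2 * e) + e / 2)) = I / (2 * e) + e / 2 := by
    rw [intervalIntegral.integral_add (f := fun t => f t ^ 2 / (2 * e)) (((hf.pow 2).div_const _).intervalIntegrable _ _)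
      (intervalIntegrable_const), intervalIntegral.integral_div, intervalIntegral.integral_const]
    simp [hI]
  have : I / (2 * e) + e / 2 ≤ e := by
    rw [div_add_div _ _ (by positivity : (2:ℝ) * e ≠ 0) (by norm_num : (2:ℝ) ≠ 0),
      div_le_iff₀ (by positivity)]
    nlinarith
  linarith [hint, hval ▸ hint]

lemma arith_final (q a b c s : ℝ) (hq : 0 ≤ q) (hq2 : q ^ 2 = 2) (hc : 3 ≤ c)
    (ha : 0 ≤ a) (hb : 0 ≤ b) (hs : 0 ≤ s) (h : a ^ 2 + b ^ 2 ≤ s ^ 2) :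
    q * a + q * c * b ≤ 2 * c * s := by
  have key : (q * a + q * c * b) ^ 2 ≤ (2 * c * s) ^ 2 := by
    have expand : (q * a + q * c * b) ^ 2 = 2 * (a + c * b) ^ 2 := by
      have e : (q * a + q * c * b) ^ 2 = q ^ 2 * (a + c * b) ^ 2 := by ring
      rw [e, hq2]
    rw [expand]
    nlinarith [sq_nonneg (c * b - a),
      mul_nonneg (by nlinarith : (0:ℝ) ≤ c ^ 2) (by linarith : (0:ℝ) ≤ s ^ 2 - (a ^ 2 + b ^ 2)),
      mul_nonneg (by nlinarith : (0:ℝ) ≤ c ^ 2 - 1) (sq_nonneg a)]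
  have hu : 0 ≤ q * a + q * c * b := by
    have : (0:ℝ) ≤ c := by linarith
    positivity
  have hv : 0 ≤ 2 * c * s := by nlinarith
  have h5 := Real.sqrt_le_sqrt key
  rwa [Real.sqrt_sq hu, Real.sqrt_sq hv] at h5

/-- For `S ∈ W¹_r`, `n ≥ 2` and `1 ≤ j ≤ n`, `|θ_{j,n} − θ_j| ≤ 2π√r · j/n`. -/
theorem stmt12 (r : ℝ) (hr : 0 < r) (S : ℝ → ℝ) (hS : S ∈ WBall 1 r)
    (n : ℕ) (hn : 2 ≤ n) (j : ℕ) (hj1 : 1 ≤ j) (hjn : j ≤ n) :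
    |thetaDisc n S j - thetaCont S j| ≤ 2 * Real.pi * Real.sqrt r * j / n := by
  obtain ⟨hper, hsmooth, hsum⟩ := hS
  have hScont : Continuous S := hsmooth.continuous
  have hSd : ∀ x, HasDerivAt S (deriv S x) x := fun x =>
    ((hsmooth.differentiable (by norm_num)) x).hasDerivAt
  have hS'cont : Continuous (deriv S) := hsmooth.continuous_deriv le_rfl
  -- the two Sobolev integrals
  set Ib := ∫ t in (0:ℝ)..1, S t ^ 2 with hIb
  set Ia := ∫ t in (0:ℝ)..1, deriv S t ^ 2 with hIa
  have hsum2 : Ib + Ia ≤ r := by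
    have := hsum
    rw [Finset.sum_range_succ, Finset.sum_range_one, iteratedDeriv_zero, iteratedDeriv_one] at this
    simpa [hIb, hIa] using this
  have hIb0 : 0 ≤ Ib := intervalIntegral.integral_nonneg (by norm_num) (fun u _ => sq_nonneg _)
  have hIa0 : 0 ≤ Ia := intervalIntegral.integral_nonneg (by norm_num) (fun u _ => sq_nonneg _)
  -- g and its derivative
  set g : ℝ → ℝ := fun t => S t * phiB j t with hgdef
  set g' : ℝ → ℝ := fun t => deriv S t * phiB j t + S t * phiB' j t with hg'def
  have hg : ∀ t, HasDerivAt g (g' t) t := fun t => (hSd t).mul (hasDerivAt_phiB j t)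
  have hgc : Continuous g := hScont.mul (continuous_phiB j)
  have hg'c : Continuous g' := (hS'cont.mul (continuous_phiB j)).add (hScont.mul (continuous_phiB' j))
  have hGc : Continuous (fun t => |g' t|) := hg'c.abs
  -- partition points
  have hn0 : (0:ℝ) < n := by positivity
  set a : ℕ → ℝ := fun i => (i : ℝ) / n with hadef
  have hstep : ∀ i : ℕ, a (i + 1) - a i = 1 / n := by
    intro i; simp only [hadef]; push_cast; field_simp; ring
  have hmono : ∀ i : ℕ, a i ≤ a (i + 1) := by
    intro i
    have h1 := hstep i
    have h2 : (0:ℝ) < 1 / n := by positivity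
    linarith
  have ha0 : a 0 = 0 := by simp [hadef]
  have han : a n = 1 := by simp only [hadef]; exact div_self hn0.ne'
  -- Step A: continuous coefficient as a sum
  have stepA : thetaCont S j = ∑ i ∈ Finset.range n, ∫ t in a i..a (i + 1), g t := by
    rw [thetaCont, ← ha0, ← han]
    exact (intervalIntegral.sum_integral_adjacent_intervals
      (fun k _ => hgc.intervalIntegrable _ _)).symm
  -- Step B: discrete coefficient as a sum
  have stepB : thetaDisc n S j = ∑ i ∈ Finset.range n, (1 / (n:ℝ)) * g (a (i + 1)) := by
    rw [thetaDisc, Finset.mul_sum]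
    calc ∑ l ∈ Finset.Icc 1 n, (1 / (n:ℝ)) * (S ((l : ℝ) / n) * phiB j ((l : ℝ) / n))
        = ∑ l ∈ Finset.Icc 1 n, (1 / (n:ℝ)) * g (a l) := by
          apply Finset.sum_congr rfl; intro l _; simp [hgdef, hadef]
      _ = ∑ i ∈ Finset.range (n + 1 - 1), (1 / (n:ℝ)) * g (a (1 + i)) := by
          rw [← Finset.Ico_add_one_right_eq_Icc, Finset.sum_Ico_eq_sum_range]
      _ = ∑ i ∈ Finset.range n, (1 / (n:ℝ)) * g (a (i + 1)) := by
          simp only [Nat.add_sub_cancel]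
          apply Finset.sum_congr rfl
          intro i _
          rw [Nat.add_comm 1 i]
  -- Step C: difference as sum of local errors
  have stepC : thetaDisc n S j - thetaCont S j
      = ∑ i ∈ Finset.range n, ∫ t in a i..a (i + 1), (g (a (i + 1)) - g t) := by
    rw [stepA, stepB, ← Finset.sum_sub_distrib]
    apply Finset.sum_congr rfl
    intro i _
    rw [intervalIntegral.integral_sub intervalIntegrable_const (hgc.intervalIntegrable _ _),
      intervalIntegral.integral_const, hstep i]
    simp
  -- Step D: local error bound
  have stepD : ∀ i ∈ Finset.range n,
      |∫ t in a i..a (i + 1), (g (a (i + 1)) - g t)|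
        ≤ (1 / (n:ℝ)) * ∫ t in a i..a (i + 1), |g' t| := by
    intro i _
    set Ci := ∫ t in a i..a (i + 1), |g' t| with hCi
    have hpt : ∀ t ∈ Set.Icc (a i) (a (i + 1)), |g (a (i + 1)) - g t| ≤ Ci := by
      intro t ht
      have hFTC : (∫ u in t..(a (i + 1)), g' u) = g (a (i + 1)) - g t :=
        intervalIntegral.integral_eq_sub_of_hasDerivAt (fun x _ => hg x)
          (hg'c.intervalIntegrable _ _)
      rw [← hFTC]
      calc |∫ u in t..(a (i + 1)), g' u| ≤ ∫ u in t..(a (i + 1)), |g' u| :=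
            intervalIntegral.abs_integral_le_integral_abs ht.2
        _ ≤ Ci := by
            apply intervalIntegral.integral_mono_interval ht.1 ht.2 le_rfl
            · exact Filter.Eventually.of_forall fun u => abs_nonneg _
            · exact hGc.intervalIntegrable _ _
    calc |∫ t in a i..a (i + 1), (g (a (i + 1)) - g t)|
        ≤ ∫ t in a i..a (i + 1), |g (a (i + 1)) - g t| :=
          intervalIntegral.abs_integral_le_integral_abs (hmono i)
      _ ≤ ∫ t in a i..a (i + 1), Ci := by
          apply intervalIntegral.integral_mono_on (hmono i)
          · exact (continuous_const.sub hgc).abs.intervalIntegrable _ _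
          · exact intervalIntegrable_const
          · exact hpt
      _ = (1 / (n:ℝ)) * Ci := by
          rw [intervalIntegral.integral_const, hstep i]; simp
  -- Step E: sum of |g'| integrals
  have stepE : ∑ i ∈ Finset.range n, (∫ t in a i..a (i + 1), |g' t|)
      = ∫ t in (0:ℝ)..1, |g' t| := by
    rw [← ha0, ← han]
    exact intervalIntegral.sum_integral_adjacent_intervals
      (fun k _ => hGc.intervalIntegrable _ _)
  -- Step F: bound on ∫|g'|
  have hq2 : Real.sqrt 2 ^ 2 = 2 := Real.sq_sqrt (by norm_num)
  have stepF : (∫ t in (0:ℝ)..1, |g' t|)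
      ≤ Real.sqrt 2 * Real.sqrt Ia + Real.sqrt 2 * Real.pi * j * Real.sqrt Ib := by
    have hpt : ∀ t ∈ Set.Icc (0:ℝ) 1,
        |g' t| ≤ Real.sqrt 2 * |deriv S t| + (Real.sqrt 2 * Real.pi * j) * |S t| := by
      intro t _
      calc |g' t| ≤ |deriv S t * phiB j t| + |S t * phiB' j t| := abs_add_le _ _
        _ = |deriv S t| * |phiB j t| + |S t| * |phiB' j t| := by rw [abs_mul, abs_mul]
        _ ≤ |deriv S t| * Real.sqrt 2 + |S t| * (Real.sqrt 2 * Real.pi * j) := by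
            gcongr
            · exact abs_phiB_le j t
            · exact abs_phiB'_le j t
        _ = Real.sqrt 2 * |deriv S t| + (Real.sqrt 2 * Real.pi * j) * |S t| := by ring
    have h1 : (∫ t in (0:ℝ)..1, |g' t|)
        ≤ ∫ t in (0:ℝ)..1, (Real.sqrt 2 * |deriv S t| + (Real.sqrt 2 * Real.pi * j) * |S t|) := by
      apply intervalIntegral.integral_mono_on (by norm_num)
      · exact hGc.intervalIntegrable _ _
      · exact ((continuous_const.mul hS'cont.abs).add
          (continuous_const.mul hScont.abs)).intervalIntegrable _ _
      · exact hpt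
    have h2 : (∫ t in (0:ℝ)..1, (Real.sqrt 2 * |deriv S t| + (Real.sqrt 2 * Real.pi * j) * |S t|))
        = Real.sqrt 2 * (∫ t in (0:ℝ)..1, |deriv S t|)
          + (Real.sqrt 2 * Real.pi * j) * ∫ t in (0:ℝ)..1, |S t| := by
      rw [intervalIntegral.integral_add (f := fun t => Real.sqrt 2 * |deriv S t|)
          (g := fun t => (Real.sqrt 2 * Real.pi * j) * |S t|)
        ((continuous_const.mul hS'cont.abs).intervalIntegrable _ _)
        ((continuous_const.mul hScont.abs).intervalIntegrable _ _),
        intervalIntegral.integral_const_mul, intervalIntegral.integral_const_mul]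
    have h3 : (∫ t in (0:ℝ)..1, |deriv S t|) ≤ Real.sqrt Ia := int_abs_le_sqrt _ hS'cont
    have h4 : (∫ t in (0:ℝ)..1, |S t|) ≤ Real.sqrt Ib := int_abs_le_sqrt _ hScont
    have hnn : (0:ℝ) ≤ Real.sqrt 2 * Real.pi * j := by positivity
    calc (∫ t in (0:ℝ)..1, |g' t|) ≤ _ := h1
      _ = _ := h2
      _ ≤ Real.sqrt 2 * Real.sqrt Ia + Real.sqrt 2 * Real.pi * j * Real.sqrt Ib :=
          add_le_add (mul_le_mul_of_nonneg_left h3 (Real.sqrt_nonneg 2))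
            (mul_le_mul_of_nonneg_left h4 hnn)
  -- combine
  have key : |thetaDisc n S j - thetaCont S j| ≤ (1 / (n:ℝ)) * ∫ t in (0:ℝ)..1, |g' t| := by
    rw [stepC]
    calc |∑ i ∈ Finset.range n, ∫ t in a i..a (i + 1), (g (a (i + 1)) - g t)|
        ≤ ∑ i ∈ Finset.range n, |∫ t in a i..a (i + 1), (g (a (i + 1)) - g t)| :=
          Finset.abs_sum_le_sum_abs _ _
      _ ≤ ∑ i ∈ Finset.range n, (1 / (n:ℝ)) * ∫ t in a i..a (i + 1), |g' t| :=
          Finset.sum_le_sum stepD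
      _ = (1 / (n:ℝ)) * ∑ i ∈ Finset.range n, ∫ t in a i..a (i + 1), |g' t| := by
          rw [Finset.mul_sum]
      _ = (1 / (n:ℝ)) * ∫ t in (0:ℝ)..1, |g' t| := by rw [stepE]
  -- final arithmetic
  have hpi3 : (3:ℝ) ≤ Real.pi := by linarith [Real.pi_gt_three]
  have hj1' : (1:ℝ) ≤ (j:ℝ) := by exact_mod_cast hj1
  have hcpij : (3:ℝ) ≤ Real.pi * j := by nlinarith
  have hrs : Real.sqrt Ia ^ 2 + Real.sqrt Ib ^ 2 ≤ Real.sqrt r ^ 2 := by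
    rw [Real.sq_sqrt hIa0, Real.sq_sqrt hIb0, Real.sq_sqrt hr.le]
    linarith
  have harith : Real.sqrt 2 * Real.sqrt Ia + Real.sqrt 2 * Real.pi * j * Real.sqrt Ib
      ≤ 2 * Real.pi * j * Real.sqrt r := by
    have := arith_final (Real.sqrt 2) (Real.sqrt Ia) (Real.sqrt Ib) (Real.pi * j) (Real.sqrt r)
      (Real.sqrt_nonneg 2) hq2 hcpij (Real.sqrt_nonneg _) (Real.sqrt_nonneg _)
      (Real.sqrt_nonneg _) hrs
    calc Real.sqrt 2 * Real.sqrt Ia + Real.sqrt 2 * Real.pi * j * Real.sqrt Ib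
        = Real.sqrt 2 * Real.sqrt Ia + Real.sqrt 2 * (Real.pi * j) * Real.sqrt Ib := by ring
      _ ≤ 2 * (Real.pi * j) * Real.sqrt r := this
      _ = 2 * Real.pi * j * Real.sqrt r := by ring
  have hfin : (1 / (n:ℝ)) * (∫ t in (0:ℝ)..1, |g' t|) ≤ 2 * Real.pi * Real.sqrt r * j / n := by
    have h1n : (0:ℝ) < 1 / n := by positivity
    calc (1 / (n:ℝ)) * (∫ t in (0:ℝ)..1, |g' t|)
        ≤ (1 / (n:ℝ)) * (Real.sqrt 2 * Real.sqrt Ia + Real.sqrt 2 * Real.pi * j * Real.sqrt Ib) :=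
          mul_le_mul_of_nonneg_left stepF h1n.le
      _ ≤ (1 / (n:ℝ)) * (2 * Real.pi * j * Real.sqrt r) :=
          mul_le_mul_of_nonneg_left harith h1n.le
      _ = 2 * Real.pi * Real.sqrt r * j / n := by ring
  linarith [key, hfin]
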